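/- Let m = n. Let f, g ∈ ℝ^n, set P := P(f,g), and let η = (α, β) ∈ ℝ^n × ℝ^n satisfy ‖(f,g) − (α,β)‖_∞ ≤ 1. Then there exists a vector z = (δf, δg) ∈ ℝ^n × ℝ^n solving the linear system J_F(f,g) z = [J_F(f,g) − J_F(α,β)] ((f,g) − (α,β)) such that ‖z‖_∞ ≤ ω ‖(f,g) − (α,β)‖_∞², where ω := (e^{1/ε} − 1) · (1 + 2 e^{1/ε} · max{‖P 1_n‖_∞, ‖Pᵀ 1_n‖_∞} / min_{i,j} P_{ij}). -/

import Mathlib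

open Matrix
open scoped RealInnerProductSpace


lemma symm_solvable {m : Type*} [Fintype m] [DecidableEq m] (A : Matrix m m ℝ)
    (hA : A.IsHermitian) (r : m → ℝ) (hr : ∀ v : m → ℝ, A *ᵥ v = 0 → r ⬝ᵥ v = 0) :
    ∃ z : m → ℝ, A *ᵥ z = r := by
  set T := Matrix.toEuclideanLin A with hT
  have hsymm : T.IsSymmetric := Matrix.isHermitian_iff_isSymmetric.mp hA
  have hrange : LinearMap.range T = (LinearMap.ker T)ᗮ := by
    apply Submodule.eq_of_le_of_finrank_eq
    · rintro x ⟨y, rfl⟩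
      intro v hv
      have hv0 : T v = 0 := hv
      rw [← hsymm v y, hv0]
      simp
    · have h1 := LinearMap.finrank_range_add_finrank_ker T
      have h2 := Submodule.finrank_add_finrank_orthogonal (𝕜 := ℝ) (LinearMap.ker T)
      omega
  have hker : ∀ v : EuclideanSpace ℝ m, T v = 0 → A *ᵥ (WithLp.equiv 2 (m → ℝ) v) = 0 := by
    intro v hv
    have := congrArg (WithLp.equiv 2 (m → ℝ)) hv
    simpa [hT, Matrix.toEuclideanLin_apply] using this
  have hrmem : ((WithLp.equiv 2 (m → ℝ)).symm r) ∈ (LinearMap.ker T)ᗮ := by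
    intro v hv
    have h0 : A *ᵥ (WithLp.equiv 2 (m → ℝ) v) = 0 := hker v hv
    have := hr _ h0
    rw [real_inner_comm]
    simpa [PiLp.inner_apply, dotProduct, mul_comm] using this
  rw [← hrange] at hrmem
  obtain ⟨z, hz⟩ := hrmem
  refine ⟨WithLp.equiv 2 (m → ℝ) z, ?_⟩
  have := congrArg (WithLp.equiv 2 (m → ℝ)) hz
  simpa [hT, Matrix.toEuclideanLin_apply] using this

lemma blockB_mulVec {n : ℕ} (Q : Matrix (Fin n) (Fin n) ℝ) (v : Fin n ⊕ Fin n → ℝ) :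
    (fromBlocks (diagonal (Q *ᵥ 1)) Q Qᵀ (diagonal (Qᵀ *ᵥ 1))) *ᵥ v
      = Sum.elim (fun i => ∑ j, Q i j * (v (Sum.inl i) + v (Sum.inr j)))
          (fun j => ∑ i, Q i j * (v (Sum.inl i) + v (Sum.inr j))) := by
  funext k
  rcases k with i | j
  · simp only [Matrix.mulVec, dotProduct, Fintype.sum_sum_type,
      Matrix.fromBlocks_apply₁₁, Matrix.fromBlocks_apply₁₂, Sum.elim_inl,
      Matrix.diagonal_apply, ite_mul, zero_mul, Finset.sum_ite_eq,
      Finset.mem_univ, if_true]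
    simp only [Matrix.mulVec, dotProduct, mul_one, Finset.sum_mul, mul_add]
    rw [Finset.sum_add_distrib]
    simp [Pi.one_apply]
  · simp only [Matrix.mulVec, dotProduct, Fintype.sum_sum_type,
      Matrix.fromBlocks_apply₂₁, Matrix.fromBlocks_apply₂₂, Sum.elim_inr,
      Matrix.diagonal_apply, ite_mul, zero_mul, Finset.sum_ite_eq,
      Finset.mem_univ, if_true, Matrix.transpose_apply]
    simp only [Matrix.mulVec, dotProduct, mul_one, Finset.sum_mul, mul_add,
      Matrix.transpose_apply]
    rw [Finset.sum_add_distrib]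
    simp [Pi.one_apply, add_comm]

lemma recenter {n : ℕ} (hn : 0 < n) (P : Matrix (Fin n) (Fin n) ℝ)
    (p R : ℝ) (hp0 : 0 < p) (hp : ∀ i j, p ≤ P i j)
    (z₀ r : Fin n ⊕ Fin n → ℝ)
    (hrow : ∀ i, ∑ j, P i j * (z₀ (Sum.inl i) + z₀ (Sum.inr j)) = r (Sum.inl i))
    (hcol : ∀ j, ∑ i, P i j * (z₀ (Sum.inl i) + z₀ (Sum.inr j)) = r (Sum.inr j))
    (hR : ∀ k, |r k| ≤ R) :
    ∃ z : Fin n ⊕ Fin n → ℝ,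
      (∀ i j, z (Sum.inl i) + z (Sum.inr j) = z₀ (Sum.inl i) + z₀ (Sum.inr j)) ∧
      ‖z‖ ≤ R / (2 * p) := by
  have hne : Nonempty (Fin n ⊕ Fin n) := ⟨Sum.inl ⟨0, hn⟩⟩
  have hR0 : 0 ≤ R := le_trans (abs_nonneg _) (hR hne.some)
  set w : Fin n ⊕ Fin n → ℝ :=
    Sum.elim (fun i => z₀ (Sum.inl i)) (fun j => -z₀ (Sum.inr j)) with hw
  obtain ⟨kmax, hkmax⟩ := Finite.exists_max w
  obtain ⟨kmin, hkmin⟩ := Finite.exists_min w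
  have hs0 : 0 ≤ w kmax - w kmin := by have := hkmax kmin; linarith
  -- helper identities
  have e1 : ∀ i, ∑ j, P i j * (w (Sum.inl i) - w (Sum.inr j)) = r (Sum.inl i) := by
    intro i; rw [← hrow i]
    exact Finset.sum_congr rfl fun j _ => by simp [hw, sub_neg_eq_add]
  have e2 : ∀ i, ∑ j, P i j * (w (Sum.inr j) - w (Sum.inl i)) = - r (Sum.inl i) := by
    intro i; rw [← e1 i, ← Finset.sum_neg_distrib]
    exact Finset.sum_congr rfl fun j _ => by ring
  have e3 : ∀ j, ∑ i, P i j * (w (Sum.inl i) - w (Sum.inr j)) = r (Sum.inr j) := by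
    intro j; rw [← hcol j]
    exact Finset.sum_congr rfl fun i _ => by simp [hw, sub_neg_eq_add]
  have e4 : ∀ j, ∑ i, P i j * (w (Sum.inr j) - w (Sum.inl i)) = - r (Sum.inr j) := by
    intro j; rw [← e3 j, ← Finset.sum_neg_distrib]
    exact Finset.sum_congr rfl fun i _ => by ring
  -- the key spread estimate
  have key : p * (w kmax - w kmin) ≤ R := by
    rcases kmax with i1 | j1 <;> rcases kmin with i2 | j2
    · -- both on the left
      by_cases h12 : i1 = i2
      · subst h12; simpa using hR0
      · have hn2 : (2 : ℝ) ≤ n := by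
          have h := Fintype.one_lt_card_iff.mpr ⟨i1, i2, h12⟩
          rw [Fintype.card_fin] at h
          exact_mod_cast h
        have hterm : ∀ j, p * (w (Sum.inl i1) - w (Sum.inl i2)) ≤
            P i1 j * (w (Sum.inl i1) - w (Sum.inr j)) +
            P i2 j * (w (Sum.inr j) - w (Sum.inl i2)) := by
          intro j
          have h1 := hkmax (Sum.inr j); have h2 := hkmin (Sum.inr j)
          have h3 := hp i1 j; have h4 := hp i2 j
          nlinarith
        have hsum : (n : ℝ) * (p * (w (Sum.inl i1) - w (Sum.inl i2))) ≤ 2 * R := by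
          calc (n : ℝ) * (p * (w (Sum.inl i1) - w (Sum.inl i2)))
              = ∑ _j : Fin n, p * (w (Sum.inl i1) - w (Sum.inl i2)) := by
                simp [Finset.sum_const, nsmul_eq_mul]
            _ ≤ ∑ j, (P i1 j * (w (Sum.inl i1) - w (Sum.inr j)) +
                  P i2 j * (w (Sum.inr j) - w (Sum.inl i2))) :=
                Finset.sum_le_sum fun j _ => hterm j
            _ = r (Sum.inl i1) + - r (Sum.inl i2) := by
                rw [Finset.sum_add_distrib, e1 i1, e2 i2]
            _ ≤ 2 * R := by
                have ha := (abs_le.mp (hR (Sum.inl i1))).2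
                have hb := (abs_le.mp (hR (Sum.inl i2))).1
                linarith
        have hps : 0 ≤ p * (w (Sum.inl i1) - w (Sum.inl i2)) := mul_nonneg hp0.le hs0
        nlinarith
    · -- max on the left, min on the right
      have hnn : ∀ j, 0 ≤ P i1 j * (w (Sum.inl i1) - w (Sum.inr j)) := fun j =>
        mul_nonneg (le_trans hp0.le (hp i1 j)) (by linarith [hkmax (Sum.inr j)])
      have hsingle := Finset.single_le_sum (f := fun j => P i1 j * (w (Sum.inl i1) - w (Sum.inr j)))
        (fun j _ => hnn j) (Finset.mem_univ j2)
      rw [e1 i1] at hsingle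
      have := (abs_le.mp (hR (Sum.inl i1))).2
      nlinarith [mul_nonneg (sub_nonneg.mpr (hp i1 j2)) hs0]
    · -- max on the right, min on the left
      have hnn : ∀ i, 0 ≤ P i j1 * (w (Sum.inr j1) - w (Sum.inl i)) := fun i =>
        mul_nonneg (le_trans hp0.le (hp i j1)) (by linarith [hkmax (Sum.inl i)])
      have hsingle := Finset.single_le_sum (f := fun i => P i j1 * (w (Sum.inr j1) - w (Sum.inl i)))
        (fun i _ => hnn i) (Finset.mem_univ i2)
      rw [e4 j1] at hsingle
      have := (abs_le.mp (hR (Sum.inr j1))).1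
      nlinarith [mul_nonneg (sub_nonneg.mpr (hp i2 j1)) hs0]
    · -- both on the right
      by_cases h12 : j1 = j2
      · subst h12; simpa using hR0
      · have hn2 : (2 : ℝ) ≤ n := by
          have h := Fintype.one_lt_card_iff.mpr ⟨j1, j2, h12⟩
          rw [Fintype.card_fin] at h
          exact_mod_cast h
        have hterm : ∀ i, p * (w (Sum.inr j1) - w (Sum.inr j2)) ≤
            P i j1 * (w (Sum.inr j1) - w (Sum.inl i)) +
            P i j2 * (w (Sum.inl i) - w (Sum.inr j2)) := by
          intro i
          have h1 := hkmax (Sum.inl i); have h2 := hkmin (Sum.inl i)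
          have h3 := hp i j1; have h4 := hp i j2
          nlinarith
        have hsum : (n : ℝ) * (p * (w (Sum.inr j1) - w (Sum.inr j2))) ≤ 2 * R := by
          calc (n : ℝ) * (p * (w (Sum.inr j1) - w (Sum.inr j2)))
              = ∑ _i : Fin n, p * (w (Sum.inr j1) - w (Sum.inr j2)) := by
                simp [Finset.sum_const, nsmul_eq_mul]
            _ ≤ ∑ i, (P i j1 * (w (Sum.inr j1) - w (Sum.inl i)) +
                  P i j2 * (w (Sum.inl i) - w (Sum.inr j2))) :=
                Finset.sum_le_sum fun i _ => hterm i
            _ = - r (Sum.inr j1) + r (Sum.inr j2) := by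
                rw [Finset.sum_add_distrib, e4 j1, e3 j2]
            _ ≤ 2 * R := by
                have ha := (abs_le.mp (hR (Sum.inr j1))).1
                have hb := (abs_le.mp (hR (Sum.inr j2))).2
                linarith
        have hps : 0 ≤ p * (w (Sum.inr j1) - w (Sum.inr j2)) := mul_nonneg hp0.le hs0
        nlinarith
  -- recentering
  set c : ℝ := (w kmax + w kmin) / 2 with hc
  refine ⟨Sum.elim (fun i => z₀ (Sum.inl i) - c) (fun j => z₀ (Sum.inr j) + c), ?_, ?_⟩
  · intro i j; simp only [Sum.elim_inl, Sum.elim_inr]; ring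
  · have hbound : (w kmax - w kmin) / 2 ≤ R / (2 * p) := by
      rw [div_le_div_iff₀ (by norm_num) (by positivity)]
      nlinarith
    rw [pi_norm_le_iff_of_nonneg (by positivity)]
    intro k
    rcases k with i | j
    · rw [Sum.elim_inl, Real.norm_eq_abs, abs_le]
      have h1 := hkmax (Sum.inl i); have h2 := hkmin (Sum.inl i)
      simp only [hw, Sum.elim_inl] at h1 h2
      constructor
      · linarith [hbound]
      · linarith [hbound]
    · rw [Sum.elim_inr, Real.norm_eq_abs, abs_le]
      have h1 := hkmax (Sum.inr j); have h2 := hkmin (Sum.inr j)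
      simp only [hw, Sum.elim_inr] at h1 h2
      constructor
      · linarith [hbound]
      · linarith [hbound]


lemma abs_one_sub_exp_le (s : ℝ) : |1 - Real.exp s| ≤ Real.exp |s| - 1 := by
  rcases le_or_gt 0 s with h | h
  · rw [abs_of_nonneg h, abs_sub_comm, abs_of_nonneg (by linarith [Real.one_le_exp h])]
  · rw [abs_of_neg h, abs_of_nonneg (by nlinarith [Real.exp_lt_one_iff.mpr h] : (0:ℝ) ≤ 1 - Real.exp s)]
    nlinarith [Real.add_one_le_exp s, Real.add_one_le_exp (-s)]



set_option maxHeartbeats 1000000 in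
/-- Quadratic-convergence estimate for the Sinkhorn--Newton method (`m = n`):
for `η = (α, β)` with `‖(f,g) − (α,β)‖_∞ ≤ 1`, the linear system
`J_F(f,g) z = [J_F(f,g) − J_F(α,β)] ((f,g) − (α,β))` admits a solution `z` with
`‖z‖_∞ ≤ ω ‖(f,g) − (α,β)‖_∞²`, where
`ω = (e^{1/ε} − 1)(1 + 2 e^{1/ε} max{‖P 1‖_∞, ‖Pᵀ 1‖_∞} / min_{ij} P_{ij})`. -/
theorem sinkhorn_newton_quadratic_estimate (n : ℕ) (C : Matrix (Fin n) (Fin n) ℝ)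
    (ε : ℝ) (hε : 0 < ε) (f g α β : Fin n → ℝ)
    (hclose : ‖Sum.elim (f - α) (g - β)‖ ≤ 1) :
    let Pm : (Fin n → ℝ) → (Fin n → ℝ) → Matrix (Fin n) (Fin n) ℝ :=
      fun u v i j => Real.exp (-u i / ε) * Real.exp (-C i j / ε) * Real.exp (-v j / ε)
    let J : (Fin n → ℝ) → (Fin n → ℝ) → Matrix (Fin n ⊕ Fin n) (Fin n ⊕ Fin n) ℝ :=
      fun u v =>
        (1 / ε) • Matrix.fromBlocks (Matrix.diagonal (Pm u v *ᵥ 1)) (Pm u v)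
          (Pm u v)ᵀ (Matrix.diagonal ((Pm u v)ᵀ *ᵥ 1))
    let P : Matrix (Fin n) (Fin n) ℝ := Pm f g
    let ω : ℝ :=
      (Real.exp (1 / ε) - 1) *
        (1 + 2 * Real.exp (1 / ε) *
          (max ‖P *ᵥ (1 : Fin n → ℝ)‖ ‖Pᵀ *ᵥ (1 : Fin n → ℝ)‖ /
            ⨅ p : Fin n × Fin n, P p.1 p.2))
    ∃ z : Fin n ⊕ Fin n → ℝ,
      J f g *ᵥ z = (J f g - J α β) *ᵥ Sum.elim (f - α) (g - β) ∧
      ‖z‖ ≤ ω * ‖Sum.elim (f - α) (g - β)‖ ^ 2 := by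

  intro Pm J Pmat ω
  have hPm : Pm = fun u v i j => Real.exp (-u i / ε) * Real.exp (-C i j / ε) * Real.exp (-v j / ε) := rfl
  have hJdef : J = fun u v =>
      (1 / ε) • Matrix.fromBlocks (Matrix.diagonal (Pm u v *ᵥ 1)) (Pm u v)
        (Pm u v)ᵀ (Matrix.diagonal ((Pm u v)ᵀ *ᵥ 1)) := rfl
  have hPmat : Pmat = Pm f g := rfl
  have hωdef : ω = (Real.exp (1 / ε) - 1) *
      (1 + 2 * Real.exp (1 / ε) *
        (max ‖Pmat *ᵥ (1 : Fin n → ℝ)‖ ‖Pmatᵀ *ᵥ (1 : Fin n → ℝ)‖ /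
          ⨅ p : Fin n × Fin n, Pmat p.1 p.2)) := rfl
  have hu1 : (1:ℝ) ≤ Real.exp (1/ε) := Real.one_le_exp (by positivity)
  rcases Nat.eq_zero_or_pos n with hn | hn
  · subst hn
    refine ⟨0, ?_, ?_⟩
    · funext k; rcases k with i | j
      · exact i.elim0
      · exact j.elim0
    · have h0 : ‖(0 : Fin 0 ⊕ Fin 0 → ℝ)‖ = 0 := norm_zero
      rw [h0]
      have hinf : (⨅ p : Fin 0 × Fin 0, Pmat p.1 p.2) = 0 := Real.iInf_of_isEmpty _
      have hω0 : 0 ≤ ω := by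
        rw [hωdef, hinf, div_zero, mul_zero, add_zero, mul_one]
        linarith
      positivity
  · -- main case `0 < n`
    set a : Fin n → ℝ := f - α with ha
    set b : Fin n → ℝ := g - β with hb
    set d : Fin n ⊕ Fin n → ℝ := Sum.elim a b with hd
    set δ : ℝ := ‖d‖ with hδ
    set u : ℝ := Real.exp (1/ε) with hu
    have hδ0 : 0 ≤ δ := norm_nonneg _
    have hδ1 : δ ≤ 1 := hclose
    have hu2 : Real.exp (2/ε) = u^2 := by
      rw [hu, sq, ← Real.exp_add]; congr 1; ring
    have habs : ∀ i, |a i| ≤ δ := fun i => by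
      have := norm_le_pi_norm d (Sum.inl i)
      simpa [hd, Real.norm_eq_abs] using this
    have hbabs : ∀ j, |b j| ≤ δ := fun j => by
      have := norm_le_pi_norm d (Sum.inr j)
      simpa [hd, Real.norm_eq_abs] using this
    have hPpos : ∀ i j, 0 < Pmat i j := fun i j => by
      rw [hPmat, hPm]; positivity
    set Q : Matrix (Fin n) (Fin n) ℝ := Pm α β with hQdef
    have hQpos : ∀ i j, 0 < Q i j := fun i j => by
      rw [hQdef, hPm]; positivity
    have hQ : ∀ i j, Q i j = Pmat i j * Real.exp ((a i + b j)/ε) := by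
      intro i j
      rw [hQdef, hPmat, hPm]
      simp only [ha, hb, Pi.sub_apply]
      simp only [← Real.exp_add]
      congr 1
      field_simp
      ring
    -- the scaled matrices
    set Bf : Matrix (Fin n ⊕ Fin n) (Fin n ⊕ Fin n) ℝ :=
      fromBlocks (diagonal (Pmat *ᵥ 1)) Pmat Pmatᵀ (diagonal (Pmatᵀ *ᵥ 1)) with hBf
    set Bα : Matrix (Fin n ⊕ Fin n) (Fin n ⊕ Fin n) ℝ :=
      fromBlocks (diagonal (Q *ᵥ 1)) Q Qᵀ (diagonal (Qᵀ *ᵥ 1)) with hBα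
    have hJf : J f g = (1/ε) • Bf := by rw [hJdef, hBf, hPmat]
    have hJα : J α β = (1/ε) • Bα := by rw [hJdef, hBα, hQdef]
    -- the right-hand side
    set r : Fin n ⊕ Fin n → ℝ := (Bf - Bα) *ᵥ d with hr
    have hrl : ∀ i, r (Sum.inl i) = ∑ j, (Pmat i j - Q i j) * (a i + b j) := by
      intro i
      rw [hr, Matrix.sub_mulVec, Pi.sub_apply, hBf, hBα, blockB_mulVec, blockB_mulVec]
      simp only [Sum.elim_inl, Sum.elim_inr, hd]
      rw [← Finset.sum_sub_distrib]
      exact Finset.sum_congr rfl fun j _ => by ring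
    have hrr : ∀ j, r (Sum.inr j) = ∑ i, (Pmat i j - Q i j) * (a i + b j) := by
      intro j
      rw [hr, Matrix.sub_mulVec, Pi.sub_apply, hBf, hBα, blockB_mulVec, blockB_mulVec]
      simp only [Sum.elim_inl, Sum.elim_inr, hd]
      rw [← Finset.sum_sub_distrib]
      exact Finset.sum_congr rfl fun i _ => by ring
    -- entrywise bound on the right-hand side
    set M : ℝ := max ‖Pmat *ᵥ (1 : Fin n → ℝ)‖ ‖Pmatᵀ *ᵥ (1 : Fin n → ℝ)‖ with hM
    set Φ : ℝ := 2 * δ^2 * (u^2 - 1) with hΦ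
    have hΦ0 : 0 ≤ Φ := by
      have huu : (0:ℝ) ≤ u^2 - 1 := by nlinarith [hu1]
      rw [hΦ]
      have h2 : (0:ℝ) ≤ 2 * δ^2 := by positivity
      exact mul_nonneg h2 huu
    have hφ : ∀ i j, |(Pmat i j - Q i j) * (a i + b j)| ≤ Pmat i j * Φ := by
      intro i j
      have ht : |a i + b j| ≤ 2*δ := le_trans (abs_add_le _ _) (by linarith [habs i, hbabs j])
      have hexp : |1 - Real.exp ((a i + b j)/ε)| ≤ δ * (u^2 - 1) := by
        have h1 := abs_one_sub_exp_le ((a i + b j)/ε)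
        have h2 : Real.exp |(a i + b j)/ε| ≤ Real.exp (2*δ/ε) := by
          apply Real.exp_le_exp.mpr
          rw [abs_div, abs_of_pos hε]
          gcongr
        have h3 : Real.exp (2*δ/ε) ≤ 1 + δ * (Real.exp (2/ε) - 1) := by
          have hcx := convexOn_exp.2 (Set.mem_univ (0:ℝ)) (Set.mem_univ (2/ε))
            (by linarith : (0:ℝ) ≤ 1 - δ) hδ0 (by ring)
          simp only [smul_eq_mul, mul_zero, zero_add, Real.exp_zero, mul_one] at hcx
          have : δ * (2/ε) = 2*δ/ε := by ring
          rw [this] at hcx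
          linarith
        rw [hu2] at h3
        linarith
      have hfac : (Pmat i j - Q i j) * (a i + b j)
          = Pmat i j * ((1 - Real.exp ((a i + b j)/ε)) * (a i + b j)) := by
        rw [hQ i j]; ring
      rw [hfac, abs_mul, abs_of_pos (hPpos i j), abs_mul]
      have huu : (0:ℝ) ≤ u^2 - 1 := by nlinarith [hu1]
      have : |1 - Real.exp ((a i + b j)/ε)| * |a i + b j| ≤ (δ * (u^2-1)) * (2*δ) :=
        mul_le_mul hexp ht (abs_nonneg _) (mul_nonneg hδ0 huu)
      calc Pmat i j * (|1 - Real.exp ((a i + b j)/ε)| * |a i + b j|)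
          ≤ Pmat i j * ((δ * (u^2-1)) * (2*δ)) :=
            mul_le_mul_of_nonneg_left this (hPpos i j).le
        _ = Pmat i j * Φ := by rw [hΦ]; ring
    have hM0 : 0 ≤ M := le_trans (norm_nonneg _) (le_max_left _ _)
    have hrbound : ∀ k, |r k| ≤ M * Φ := by
      intro k
      rcases k with i | j
      · rw [hrl i]
        calc |∑ j, (Pmat i j - Q i j) * (a i + b j)|
            ≤ ∑ j, |(Pmat i j - Q i j) * (a i + b j)| := Finset.abs_sum_le_sum_abs _ _
          _ ≤ ∑ j, Pmat i j * Φ := Finset.sum_le_sum fun j _ => hφ i j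
          _ = (Pmat *ᵥ (1 : Fin n → ℝ)) i * Φ := by
              rw [← Finset.sum_mul]; congr 1
              simp [Matrix.mulVec, dotProduct]
          _ ≤ M * Φ := by
              apply mul_le_mul_of_nonneg_right _ hΦ0
              exact le_trans (le_trans (le_abs_self _)
                (by rw [← Real.norm_eq_abs]; exact norm_le_pi_norm _ i))
                (le_max_left _ _)
      · rw [hrr j]
        calc |∑ i, (Pmat i j - Q i j) * (a i + b j)|
            ≤ ∑ i, |(Pmat i j - Q i j) * (a i + b j)| := Finset.abs_sum_le_sum_abs _ _
          _ ≤ ∑ i, Pmat i j * Φ := Finset.sum_le_sum fun i _ => hφ i j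
          _ = (Pmatᵀ *ᵥ (1 : Fin n → ℝ)) j * Φ := by
              rw [← Finset.sum_mul]; congr 1
              simp [Matrix.mulVec, dotProduct, Matrix.transpose_apply]
          _ ≤ M * Φ := by
              apply mul_le_mul_of_nonneg_right _ hΦ0
              exact le_trans (le_trans (le_abs_self _)
                (by rw [← Real.norm_eq_abs]; exact norm_le_pi_norm _ j))
                (le_max_right _ _)
    -- symmetry of Bf
    have hBsymm : Bf.IsHermitian := by
      rw [Matrix.IsHermitian, Matrix.conjTranspose_eq_transpose_of_trivial, hBf,
        Matrix.fromBlocks_transpose, Matrix.transpose_transpose, Matrix.diagonal_transpose,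
        Matrix.diagonal_transpose]
    -- kernel of Bf
    have hker : ∀ v : Fin n ⊕ Fin n → ℝ, Bf *ᵥ v = 0 →
        ∀ i j, v (Sum.inl i) + v (Sum.inr j) = 0 := by
      intro v hv
      rw [hBf, blockB_mulVec] at hv
      have hrowv : ∀ i, ∑ j, Pmat i j * (v (Sum.inl i) + v (Sum.inr j)) = 0 := by
        intro i
        have := congrFun hv (Sum.inl i)
        simpa using this
      have hcolv : ∀ j, ∑ i, Pmat i j * (v (Sum.inl i) + v (Sum.inr j)) = 0 := by
        intro j
        have := congrFun hv (Sum.inr j)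
        simpa using this
      have hq : ∑ i, ∑ j, Pmat i j * (v (Sum.inl i) + v (Sum.inr j))^2 = 0 := by
        have expand : ∀ i j, Pmat i j * (v (Sum.inl i) + v (Sum.inr j))^2
            = v (Sum.inl i) * (Pmat i j * (v (Sum.inl i) + v (Sum.inr j)))
              + (Pmat i j * (v (Sum.inl i) + v (Sum.inr j))) * v (Sum.inr j) := by
          intro i j; ring
        calc ∑ i, ∑ j, Pmat i j * (v (Sum.inl i) + v (Sum.inr j))^2
            = ∑ i, ∑ j, (v (Sum.inl i) * (Pmat i j * (v (Sum.inl i) + v (Sum.inr j)))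
              + (Pmat i j * (v (Sum.inl i) + v (Sum.inr j))) * v (Sum.inr j)) := by
              exact Finset.sum_congr rfl fun i _ => Finset.sum_congr rfl fun j _ => expand i j
          _ = (∑ i, ∑ j, v (Sum.inl i) * (Pmat i j * (v (Sum.inl i) + v (Sum.inr j))))
              + ∑ i, ∑ j, (Pmat i j * (v (Sum.inl i) + v (Sum.inr j))) * v (Sum.inr j) := by
              rw [← Finset.sum_add_distrib]
              exact Finset.sum_congr rfl fun i _ => Finset.sum_add_distrib
          _ = 0 := by
              have hA : ∀ i, ∑ j, v (Sum.inl i) * (Pmat i j * (v (Sum.inl i) + v (Sum.inr j))) = 0 := by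
                intro i; rw [← Finset.mul_sum, hrowv i, mul_zero]
              have hB : ∑ i, ∑ j, (Pmat i j * (v (Sum.inl i) + v (Sum.inr j))) * v (Sum.inr j) = 0 := by
                rw [Finset.sum_comm]
                apply Finset.sum_eq_zero
                intro j _
                rw [← Finset.sum_mul, hcolv j, zero_mul]
              rw [Finset.sum_congr rfl fun i _ => hA i, Finset.sum_const, smul_zero, hB, add_zero]
      intro i j
      have hnn : ∀ i ∈ Finset.univ, (0:ℝ) ≤ ∑ j, Pmat i j * (v (Sum.inl i) + v (Sum.inr j))^2 :=
        fun i _ => Finset.sum_nonneg fun j _ => mul_nonneg (hPpos i j).le (sq_nonneg _)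
      have hrow0 := (Finset.sum_eq_zero_iff_of_nonneg hnn).mp hq i (Finset.mem_univ i)
      have hnn2 : ∀ j ∈ Finset.univ, (0:ℝ) ≤ Pmat i j * (v (Sum.inl i) + v (Sum.inr j))^2 :=
        fun j _ => mul_nonneg (hPpos i j).le (sq_nonneg _)
      have hterm0 := (Finset.sum_eq_zero_iff_of_nonneg hnn2).mp hrow0 j (Finset.mem_univ j)
      have hs2 := (mul_eq_zero.mp hterm0).resolve_left (ne_of_gt (hPpos i j))
      exact (pow_eq_zero_iff two_ne_zero).mp hs2
    -- orthogonality of r to the kernel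
    have horth : ∀ v : Fin n ⊕ Fin n → ℝ, Bf *ᵥ v = 0 → r ⬝ᵥ v = 0 := by
      intro v hv
      have hk := hker v hv
      have hvl : ∀ i, v (Sum.inl i) = v (Sum.inl ⟨0, hn⟩) := fun i => by
        have h1 := hk i ⟨0, hn⟩
        have h2 := hk ⟨0, hn⟩ ⟨0, hn⟩
        linarith
      have hvr : ∀ j, v (Sum.inr j) = - v (Sum.inl ⟨0, hn⟩) := fun j => by
        have := hk ⟨0, hn⟩ j; linarith
      have hsum : ∑ i, r (Sum.inl i) = ∑ j, r (Sum.inr j) := by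
        calc ∑ i, r (Sum.inl i) = ∑ i, ∑ j, (Pmat i j - Q i j) * (a i + b j) :=
              Finset.sum_congr rfl fun i _ => hrl i
          _ = ∑ j, ∑ i, (Pmat i j - Q i j) * (a i + b j) := Finset.sum_comm
          _ = ∑ j, r (Sum.inr j) := Finset.sum_congr rfl fun j _ => (hrr j).symm
      have e5 : ∀ i ∈ Finset.univ, r (Sum.inl i) * v (Sum.inl i)
          = r (Sum.inl i) * v (Sum.inl ⟨0, hn⟩) := fun i _ => by rw [hvl i]
      have e6 : ∀ j ∈ Finset.univ, r (Sum.inr j) * v (Sum.inr j)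
          = r (Sum.inr j) * (- v (Sum.inl ⟨0, hn⟩)) := fun j _ => by rw [hvr j]
      rw [dotProduct, Fintype.sum_sum_type, Finset.sum_congr rfl e5,
        Finset.sum_congr rfl e6, ← Finset.sum_mul, ← Finset.sum_mul, hsum]
      ring
    -- solve the linear system
    obtain ⟨z₀, hz₀⟩ := symm_solvable Bf hBsymm r horth
    have hz₀' := hz₀
    rw [hBf, blockB_mulVec] at hz₀'
    have hrow : ∀ i, ∑ j, Pmat i j * (z₀ (Sum.inl i) + z₀ (Sum.inr j)) = r (Sum.inl i) := by
      intro i; have := congrFun hz₀' (Sum.inl i); simpa using this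
    have hcol : ∀ j, ∑ i, Pmat i j * (z₀ (Sum.inl i) + z₀ (Sum.inr j)) = r (Sum.inr j) := by
      intro j; have := congrFun hz₀' (Sum.inr j); simpa using this
    -- the minimum entry
    set pmin : ℝ := ⨅ p : Fin n × Fin n, Pmat p.1 p.2 with hpmin
    have hbdd : BddBelow (Set.range fun q : Fin n × Fin n => Pmat q.1 q.2) :=
      (Set.finite_range _).bddBelow
    have hple : ∀ i j, pmin ≤ Pmat i j := fun i j => ciInf_le hbdd (i, j)
    have hne' : Nonempty (Fin n × Fin n) := ⟨(⟨0, hn⟩, ⟨0, hn⟩)⟩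
    have hp0 : 0 < pmin := by
      obtain ⟨q0, hq0⟩ := Finite.exists_min (fun q : Fin n × Fin n => Pmat q.1 q.2)
      have : Pmat q0.1 q0.2 ≤ pmin := le_ciInf hq0
      exact lt_of_lt_of_le (hPpos q0.1 q0.2) this
    -- recenter the solution
    obtain ⟨z, hzsum, hznorm⟩ := recenter hn Pmat pmin (M * Φ) hp0 hple z₀ r hrow hcol hrbound
    refine ⟨z, ?_, ?_⟩
    · -- the equation
      have hBz : Bf *ᵥ z = r := by
        rw [hBf, blockB_mulVec]
        funext k
        rcases k with i | j
        · rw [Sum.elim_inl, ← hrow i]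
          exact Finset.sum_congr rfl fun j _ => by rw [hzsum i j]
        · rw [Sum.elim_inr, ← hcol j]
          exact Finset.sum_congr rfl fun i _ => by rw [hzsum i j]
      rw [hJf, hJα, ← smul_sub, Matrix.smul_mulVec, Matrix.smul_mulVec, hBz, hr]
    · -- the norm bound
      have hfinal : M * Φ / (2 * pmin) ≤ ω * δ^2 := by
        rw [hωdef, hΦ]
        have hq0 : 0 ≤ M / pmin := div_nonneg hM0 hp0.le
        have hkey : M * (2 * δ^2 * (u^2-1)) / (2 * pmin) = (M / pmin) * (δ^2 * (u^2-1)) := by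
          field_simp
        rw [hkey]
        nlinarith [mul_nonneg (mul_nonneg hq0 (sq_nonneg δ)) (sq_nonneg (u-1)),
          mul_nonneg (sub_nonneg.mpr hu1) (sq_nonneg δ)]
      exact le_trans hznorm hfinal
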